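/- Let μ and ν be Borel probability measures on ℝ^d with finite second moments, and let F : ℝ^d → ℝ be a convex function, differentiable μ-almost everywhere, such that (∇F)_* μ = ν. Assume that x ↦ F(x) is μ-integrable and that y ↦ F*(y) is ν-integrable, where F* denotes the Fenchel (convex) conjugate of F. Then for every coupling π of μ and ν (i.e., every probability measure on ℝ^d × ℝ^d with marginals μ and ν), one has ∫ ⟨x, y⟩ dπ(x,y) ≤ ∫ ⟨x, ∇F(x)⟩ dμ(x). In particular, ∇F maximizes the expected inner product E[⟨X, g(X)⟩] among all maps g transporting μ to ν, equivalently it minimizes the expected quadratic transport cost E[‖X − g(X)‖²]. -/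

import Mathlib

open MeasureTheory Filter Topology Set
open scoped RealInnerProductSpace

theorem subgrad_aux {E : Type*} [NormedAddCommGroup E] [InnerProductSpace ℝ E] [CompleteSpace E]
    {F : E → ℝ} (hconv : ConvexOn ℝ univ F) {x : E} (hx : DifferentiableAt ℝ F x) (z : E) :
    F x + ⟪gradient F x, z - x⟫ ≤ F z := by
  set g : ℝ → ℝ := fun t => F (AffineMap.lineMap x z t) with hg
  have hgc : ConvexOn ℝ univ g := by
    have := hconv.comp_affineMap (AffineMap.lineMap x z : ℝ →ᵃ[ℝ] E)
    rw [preimage_univ] at this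
    exact this
  have hline : HasDerivAt (fun t : ℝ => AffineMap.lineMap x z t) (z - x) 0 := by
    have h1 : HasDerivAt (fun t : ℝ => t • (z - x) + x) (z - x) 0 :=
      by simpa using ((hasDerivAt_id (0:ℝ)).smul_const (z - x)).add_const x
    refine HasDerivAt.congr_of_eventuallyEq h1 ?_
    filter_upwards with t
    simp [AffineMap.lineMap_apply_module]
    module
  have hFd : HasFDerivAt F (fderiv ℝ F x) ((AffineMap.lineMap x z) (0:ℝ)) := by
    simpa using hx.hasFDerivAt
  have hder : HasDerivAt g (fderiv ℝ F x (z - x)) 0 :=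
    hFd.comp_hasDerivAt (0:ℝ) hline
  have key := hgc.le_slope_of_hasDerivAt (mem_univ (0:ℝ)) (mem_univ 1) one_pos hder
  have hgrad : fderiv ℝ F x (z - x) = ⟪gradient F x, z - x⟫ := by
    rw [gradient]
    simp [InnerProductSpace.toDual_symm_apply]
  rw [hgrad] at key
  have : slope g 0 1 = F z - F x := by simp [slope, hg]
  rw [this] at key
  linarith

/-- If the gradient of a convex potential `F` transports `μ` to `ν` (both with finite second
moments), and `F` is `μ`-integrable and its Fenchel conjugate `F*` is `ν`-integrable, then
`∇F` maximizes the expected inner product among all couplings of `μ` and `ν`: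
for every coupling `π`, `∫ ⟨x,y⟩ dπ ≤ ∫ ⟨x, ∇F(x)⟩ dμ`. -/
theorem gradient_convex_maximizes_inner_product_over_couplings
    (d : ℕ) (μ ν : Measure (EuclideanSpace ℝ (Fin d)))
    [IsProbabilityMeasure μ] [IsProbabilityMeasure ν]
    (hμ2 : Integrable (fun x => ‖x‖ ^ 2) μ) (hν2 : Integrable (fun y => ‖y‖ ^ 2) ν)
    (F : EuclideanSpace ℝ (Fin d) → ℝ) (hFconv : ConvexOn ℝ univ F)
    (hFdiff : ∀ᵐ x ∂μ, DifferentiableAt ℝ F x)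
    (hFpush : μ.map (fun x => gradient F x) = ν)
    (hFint : Integrable F μ)
    (hFstarint : Integrable (fun y : EuclideanSpace ℝ (Fin d) =>
      ⨆ x : EuclideanSpace ℝ (Fin d), (⟪x, y⟫ - F x)) ν) :
    ∀ π : Measure (EuclideanSpace ℝ (Fin d) × EuclideanSpace ℝ (Fin d)),
      IsProbabilityMeasure π → π.map Prod.fst = μ → π.map Prod.snd = ν →
      ∫ p, ⟪p.1, p.2⟫ ∂π ≤ ∫ x, ⟪x, gradient F x⟫ ∂μ := by
  intro π hπ hπ1 hπ2
  let E := EuclideanSpace ℝ (Fin d)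
  set G : EuclideanSpace ℝ (Fin d) → EuclideanSpace ℝ (Fin d) := fun x => gradient F x with hG
  set Fs : EuclideanSpace ℝ (Fin d) → ℝ :=
    fun y => ⨆ x : EuclideanSpace ℝ (Fin d), (⟪x, y⟫ - F x) with hFs
  -- continuity of F
  have hFcont : Continuous F := by
    have h := hFconv.continuousOn_interior
    rw [interior_univ] at h
    exact continuousOn_univ.mp h
  -- measurability of the gradient
  have hGmeas : Measurable G := by
    have h1 : Measurable (fun x => fderiv ℝ F x) := measurable_fderiv ℝ F
    exact ((InnerProductSpace.toDual ℝ (EuclideanSpace ℝ (Fin d))).symm.continuous.measurable).comp h1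
  -- subgradient inequality, a.e.
  have hsub : ∀ᵐ x ∂μ, ∀ w, ⟪w, G x⟫ - F w ≤ ⟪x, G x⟫ - F x := by
    filter_upwards [hFdiff] with x hx w
    have := subgrad_aux hFconv hx w
    have h2 : ⟪G x, w - x⟫ = ⟪w, G x⟫ - ⟪x, G x⟫ := by
      rw [inner_sub_right, real_inner_comm (G x) w, real_inner_comm (G x) x]
    rw [h2] at this; linarith
  -- the sup is attained at x
  have hsup : ∀ᵐ x ∂μ, Fs (G x) = ⟪x, G x⟫ - F x := by
    filter_upwards [hsub] with x hx
    have bdd : BddAbove (Set.range fun z : EuclideanSpace ℝ (Fin d) => ⟪z, G x⟫ - F z) :=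
      ⟨⟪x, G x⟫ - F x, by rintro _ ⟨z, rfl⟩; exact hx z⟩
    exact le_antisymm (ciSup_le hx) (le_ciSup bdd x)
  have hsub2 : ∀ᵐ x ∂μ, ∀ w, ⟪w, G x⟫ - F w ≤ Fs (G x) := by
    filter_upwards [hsub, hsup] with x h1 h2 w
    rw [h2]; exact h1 w
  -- strongly measurable version of Fs
  have hFsasm : AEStronglyMeasurable Fs ν := hFstarint.1
  set Fm : E → ℝ := hFsasm.mk Fs with hFmdef
  have hFm_sm : StronglyMeasurable Fm := hFsasm.stronglyMeasurable_mk
  have hFm_ae : Fs =ᵐ[ν] Fm := hFsasm.ae_eq_mk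
  have hμFm : ∀ᵐ x ∂μ, Fs (G x) = Fm (G x) :=
    ae_of_ae_map hGmeas.aemeasurable (hFpush ▸ hFm_ae)
  -- countable dense subset
  obtain ⟨D, hDc, hDd⟩ := TopologicalSpace.exists_countable_dense (EuclideanSpace ℝ (Fin d))
  have hμA : ∀ᵐ x ∂μ, ∀ w ∈ D, ⟪w, G x⟫ - F w ≤ Fm (G x) := by
    filter_upwards [hsub2, hμFm] with x h1 h2 w _
    rw [← h2]; exact h1 w
  -- the good set is measurable
  have hAmeas : MeasurableSet {y : EuclideanSpace ℝ (Fin d) | ∀ w ∈ D, ⟪w, y⟫ - F w ≤ Fm y} := by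
    have : {y : EuclideanSpace ℝ (Fin d) | ∀ w ∈ D, ⟪w, y⟫ - F w ≤ Fm y} =
        ⋂ w ∈ D, {y : EuclideanSpace ℝ (Fin d) | ⟪w, y⟫ - F w ≤ Fm y} := by
      ext y; simp
    rw [this]
    refine MeasurableSet.biInter hDc fun w _ => ?_
    exact measurableSet_le
      (((continuous_const.inner continuous_id).sub continuous_const).measurable)
      hFm_sm.measurable
  have hνA : ∀ᵐ y ∂ν, ∀ w ∈ D, ⟪w, y⟫ - F w ≤ Fm y := by
    rw [← hFpush]
    exact (ae_map_iff hGmeas.aemeasurable hAmeas).mpr hμA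
  -- transfer to π
  have hπA : ∀ᵐ p ∂π, ∀ w ∈ D, ⟪w, p.2⟫ - F w ≤ Fm p.2 :=
    ae_of_ae_map measurable_snd.aemeasurable (hπ2 ▸ hνA)
  have hπFm : ∀ᵐ p ∂π, Fs p.2 = Fm p.2 :=
    ae_of_ae_map measurable_snd.aemeasurable (hπ2 ▸ hFm_ae)
  -- Fenchel-Young a.e. on π
  have hπineq : ∀ᵐ p ∂π, ⟪p.1, p.2⟫ ≤ F p.1 + Fs p.2 := by
    filter_upwards [hπA, hπFm] with p h1 h2
    have hall : ∀ w : EuclideanSpace ℝ (Fin d), ⟪w, p.2⟫ - F w ≤ Fm p.2 := by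
      intro w
      have hc : IsClosed {w : EuclideanSpace ℝ (Fin d) | ⟪w, p.2⟫ - F w ≤ Fm p.2} :=
        isClosed_le ((continuous_id.inner continuous_const).sub hFcont) continuous_const
      have hsubs : D ⊆ {w : EuclideanSpace ℝ (Fin d) | ⟪w, p.2⟫ - F w ≤ Fm p.2} := fun w hw => h1 w hw
      have := hc.closure_subset_iff.mpr hsubs
      rw [hDd.closure_eq] at this
      exact this (mem_univ w)
    have := hall p.1
    rw [← h2] at this; linarith
  -- integrability
  have hI1 : Integrable (fun p : EuclideanSpace ℝ (Fin d) × EuclideanSpace ℝ (Fin d) => F p.1) π := by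
    have h := hπ1 ▸ hFint
    exact (integrable_map_measure (hFcont.stronglyMeasurable.aestronglyMeasurable)
      measurable_fst.aemeasurable).mp h
  have hI2 : Integrable (fun p : EuclideanSpace ℝ (Fin d) × EuclideanSpace ℝ (Fin d) => Fs p.2) π := by
    have h := hπ2 ▸ hFstarint
    exact (integrable_map_measure (hπ2 ▸ hFsasm) measurable_snd.aemeasurable).mp h
  have hInsq1 : Integrable (fun p : EuclideanSpace ℝ (Fin d) × EuclideanSpace ℝ (Fin d) => ‖p.1‖ ^ 2) π := by
    have h := hπ1 ▸ hμ2
    exact (integrable_map_measure ((continuous_norm.pow 2).stronglyMeasurable.aestronglyMeasurable)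
      measurable_fst.aemeasurable).mp h
  have hInsq2 : Integrable (fun p : EuclideanSpace ℝ (Fin d) × EuclideanSpace ℝ (Fin d) => ‖p.2‖ ^ 2) π := by
    have h := hπ2 ▸ hν2
    exact (integrable_map_measure ((continuous_norm.pow 2).stronglyMeasurable.aestronglyMeasurable)
      measurable_snd.aemeasurable).mp h
  have hIinner : Integrable (fun p : EuclideanSpace ℝ (Fin d) × EuclideanSpace ℝ (Fin d) => ⟪p.1, p.2⟫) π := by
    refine (hInsq1.add hInsq2).mono
      (continuous_inner.stronglyMeasurable.aestronglyMeasurable) ?_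
    filter_upwards with p
    simp only [Pi.add_apply]
    have h1 : ‖⟪p.1, p.2⟫‖ ≤ ‖p.1‖ * ‖p.2‖ := norm_inner_le_norm _ _
    have h2 : ‖p.1‖ * ‖p.2‖ ≤ ‖p.1‖ ^ 2 + ‖p.2‖ ^ 2 := by nlinarith [norm_nonneg p.1, norm_nonneg p.2]
    have h3 : ‖p.1‖ ^ 2 + ‖p.2‖ ^ 2 ≤ ‖‖p.1‖ ^ 2 + ‖p.2‖ ^ 2‖ := le_abs_self _
    linarith
  have hIcomp : Integrable (fun x => Fs (G x)) μ := by
    have h := hFpush ▸ hFstarint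
    exact (integrable_map_measure (hFpush ▸ hFsasm) hGmeas.aemeasurable).mp h
  -- compute
  calc ∫ p, ⟪p.1, p.2⟫ ∂π ≤ ∫ p, (F p.1 + Fs p.2) ∂π :=
        integral_mono_ae hIinner (hI1.add hI2) hπineq
    _ = ∫ p, F p.1 ∂π + ∫ p, Fs p.2 ∂π := integral_add hI1 hI2
    _ = ∫ x, F x ∂μ + ∫ y, Fs y ∂ν := by
        rw [← hπ1, ← hπ2,
          integral_map measurable_fst.aemeasurable
            (hFcont.stronglyMeasurable.aestronglyMeasurable),
          integral_map measurable_snd.aemeasurable (hπ2 ▸ hFsasm)]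
    _ = ∫ x, F x ∂μ + ∫ x, Fs (G x) ∂μ := by
        rw [← hFpush, integral_map hGmeas.aemeasurable (hFpush ▸ hFsasm)]
    _ = ∫ x, (F x + Fs (G x)) ∂μ := (integral_add hFint hIcomp).symm
    _ = ∫ x, ⟪x, gradient F x⟫ ∂μ := by
        refine integral_congr_ae ?_
        filter_upwards [hsup] with x hx
        rw [hx]; ring
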